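/- There exists a constant C > 0 such that for every real number y, ∑_{k=1}^∞ 1/√( (k²π² − y)² + 1 ) ≤ C. -/

import Mathlib

open Real

set_option maxHeartbeats 1000000

/-- Basel-type comparison function: `F j = 2 / (π² j²)` (with `F 0 = 0` by convention). -/
noncomputable def auxF : ℕ → ℝ := fun j => 2 / (π ^ 2 * (j : ℝ) ^ 2)

lemma auxF_eq : auxF = fun j : ℕ => (2 / π ^ 2) * (1 / (j : ℝ) ^ 2) := by
  funext j; unfold auxF; ring

lemma auxF_hasSum : HasSum auxF (1 / 3) := by
  have h := hasSum_zeta_two.mul_left (2 / π ^ 2)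
  rw [auxF_eq]
  convert h using 1
  case e'_3 => rfl
  have hπ : (π : ℝ) ≠ 0 := Real.pi_ne_zero
  field_simp
  ring

lemma auxF_summable : Summable auxF := auxF_hasSum.summable

lemma auxF_nonneg : ∀ j, 0 ≤ auxF j := by
  intro j; unfold auxF
  positivity

lemma auxF_tsum : ∑' j, auxF j = 1 / 3 := auxF_hasSum.tsum_eq

/-- The transfer-function series is uniformly bounded on the line `Re λ = 1`: there is a
constant `C > 0` with `∑_{k=1}^∞ 1/√((k²π² − y)² + 1) ≤ C` for every real `y`.
(The sum over `k ≥ 1` is written as a `tsum` over `k : ℕ` at index `k + 1`.) -/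
theorem transfer_function_series_bounded :
    ∃ C > (0:ℝ), ∀ y : ℝ,
      (∑' k : ℕ,
        1 / Real.sqrt (((((k : ℝ) + 1) ^ 2 * π ^ 2 - y) ^ 2) + 1)) ≤ C := by
  refine ⟨3, by norm_num, fun y => ?_⟩
  have hπ : (0:ℝ) < π := Real.pi_pos
  have hπ2 : (8:ℝ) < π ^ 2 := by nlinarith [Real.pi_gt_three]
  set s : ℝ := Real.sqrt (max y 0) / π with hs_def
  have hs0 : 0 ≤ s := div_nonneg (Real.sqrt_nonneg _) hπ.le
  have hπs : π ^ 2 * s ^ 2 = max y 0 := by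
    rw [hs_def, div_pow, Real.sq_sqrt (le_max_right y 0)]
    field_simp
  set n : ℕ := ⌊s + 1/2⌋₊ with hn_def
  have hn1 : (n:ℝ) ≤ s + 1/2 := Nat.floor_le (by linarith)
  have hn2 : s + 1/2 < (n:ℝ) + 1 := Nat.lt_floor_add_one _
  -- the two comparison functions
  set ind : ℕ → ℝ := fun k => if k + 1 = n then (1:ℝ) else 0 with hind_def
  set f2 : ℕ → ℝ := fun k => 2 / (π ^ 2 * (((k:ℝ) + 1) - (n:ℝ)) ^ 2) with hf2_def
  have hf2_nonneg : ∀ k, 0 ≤ f2 k := by intro k; rw [hf2_def]; positivity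
  have hind_zero : ∀ k ∉ ({n - 1} : Finset ℕ), ind k = 0 := by
    intro k hk
    simp only [Finset.mem_singleton] at hk
    rw [hind_def]
    simp only [ite_eq_right_iff]
    intro h; omega
  have hind_summable : Summable ind := summable_of_ne_finset_zero hind_zero
  have hind_tsum : ∑' k, ind k ≤ 1 := by
    rw [tsum_eq_sum hind_zero, Finset.sum_singleton, hind_def]
    dsimp only
    split_ifs <;> norm_num
  -- summability of f2 and its tsum bound
  have hf2_shift : (fun k : ℕ => f2 (k + n)) = fun k : ℕ => auxF (k + 1) := by
    funext k
    rw [hf2_def]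
    unfold auxF
    dsimp only
    push_cast
    ring_nf
  have hauxF_shift_summable : Summable (fun k : ℕ => auxF (k + 1)) :=
    (summable_nat_add_iff 1).mpr auxF_summable
  have hf2_summable : Summable f2 := by
    refine (summable_nat_add_iff n).mp ?_
    rw [hf2_shift]; exact hauxF_shift_summable
  have hauxF_shift_tsum : ∑' k : ℕ, auxF (k + 1) = 1 / 3 := by
    have h := Summable.sum_add_tsum_nat_add (f := auxF) 1 auxF_summable
    rw [auxF_tsum] at h
    have h0 : ∑ i ∈ Finset.range 1, auxF i = 0 := by
      simp [auxF]
    linarith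
  have hfinite : ∑ i ∈ Finset.range n, f2 i = ∑ j ∈ Finset.range n, auxF j := by
    rw [← Finset.sum_range_reflect (fun i => f2 i) n]
    refine Finset.sum_congr rfl fun j hj => ?_
    rw [Finset.mem_range] at hj
    rw [hf2_def]
    unfold auxF
    dsimp only
    have hc : ((n - 1 - j : ℕ):ℝ) = (n:ℝ) - 1 - (j:ℝ) := by
      have h5 : (n - 1 - j : ℕ) + (j + 1) = n := by omega
      have h6 := congrArg (fun m : ℕ => (m:ℝ)) h5
      push_cast at h6
      linarith
    rw [hc]
    ring_nf
  have hf2_tsum : ∑' k, f2 k ≤ 2 / 3 := by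
    have h := Summable.sum_add_tsum_nat_add (f := f2) n hf2_summable
    rw [hf2_shift, hauxF_shift_tsum, hfinite] at h
    have hfin_le : ∑ j ∈ Finset.range n, auxF j ≤ 1 / 3 := by
      rw [← auxF_tsum]
      exact Summable.sum_le_tsum _ (fun j _ => auxF_nonneg j) auxF_summable
    linarith
  -- pointwise bound
  set f : ℕ → ℝ := fun k => 1 / Real.sqrt (((((k : ℝ) + 1) ^ 2 * π ^ 2 - y) ^ 2) + 1) with hf_def
  have hf_nonneg : ∀ k, 0 ≤ f k := by
    intro k; rw [hf_def]; positivity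
  have hptwise : ∀ k, f k ≤ ind k + f2 k := by
    intro k
    set K : ℝ := (k:ℝ) + 1 with hK_def
    have hK1 : 1 ≤ K := by rw [hK_def]; have := Nat.cast_nonneg (α := ℝ) k; linarith
    set u : ℝ := K ^ 2 * π ^ 2 - y with hu_def
    have hsqrt1 : 1 ≤ Real.sqrt (u ^ 2 + 1) := by
      nth_rewrite 1 [show (1:ℝ) = Real.sqrt 1 by simp]
      exact Real.sqrt_le_sqrt (by nlinarith [sq_nonneg u])
    by_cases hkn : k + 1 = n
    · rw [hind_def]
      simp only [hkn, if_true]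
      have : f k ≤ 1 := by
        rw [hf_def]
        exact div_le_one_of_le₀ hsqrt1 (by positivity)
      have := hf2_nonneg k
      linarith
    · rw [hind_def]
      simp only [hkn, if_false, zero_add]
      set d : ℝ := K - (n:ℝ) with hd_def
      have hd1 : 1 ≤ |d| := by
        rcases lt_or_gt_of_ne (fun h : k + 1 = n => hkn h) with h | h
        · have hcast : (k:ℝ) + 1 + 1 ≤ (n:ℝ) := by exact_mod_cast Nat.succ_le_of_lt h
          rw [abs_of_nonpos (by rw [hd_def, hK_def]; linarith)]
          rw [hd_def, hK_def]; linarith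
        · have hcast : (n:ℝ) + 1 ≤ (k:ℝ) + 1 := by exact_mod_cast Nat.succ_le_of_lt h
          rw [abs_of_nonneg (by rw [hd_def, hK_def]; linarith)]
          rw [hd_def, hK_def]; linarith
      -- step A : |u| ≥ π² |K - s| (K + s)
      have hA : π ^ 2 * |K - s| * (K + s) ≤ |u| := by
        rcases le_or_gt y 0 with hy | hy
        · have hmax : max y 0 = 0 := max_eq_right hy
          have hs_zero : s = 0 := by
            rw [hmax] at hπs
            have hsq : s ^ 2 = 0 := by nlinarith
            exact pow_eq_zero_iff (by norm_num) |>.mp hsq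
          rw [hs_zero]
          have hu_pos : 0 < u := by rw [hu_def]; nlinarith [mul_self_nonneg (K - 1)]
          rw [abs_of_pos hu_pos, abs_of_pos (by linarith : (0:ℝ) < K - 0)]
          rw [hu_def]; nlinarith [mul_self_nonneg (K - 1)]
        · have hmax : max y 0 = y := max_eq_left hy.le
          rw [hmax] at hπs
          have huf : u = π ^ 2 * (K - s) * (K + s) := by rw [hu_def, ← hπs]; ring
          rw [huf, abs_mul, abs_mul, abs_of_pos (by positivity : (0:ℝ) < π ^ 2),
            abs_of_pos (by linarith : (0:ℝ) < K + s)]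
      -- step B : |K - s| ≥ |d|/2
      have hsn : |s - (n:ℝ)| ≤ 1/2 := abs_le.mpr ⟨by linarith, by linarith⟩
      have hB : |d| / 2 ≤ |K - s| := by
        have htri : |d| ≤ |K - s| + |s - (n:ℝ)| := by
          have := abs_sub_le K s (n:ℝ)
          rw [hd_def]; linarith [this]
        linarith
      -- step C : K + s ≥ |d|
      have hC : |d| ≤ K + s := by
        rcases lt_or_gt_of_ne (fun h : k + 1 = n => hkn h) with h | h
        · have hcast : (k:ℝ) + 1 + 1 ≤ (n:ℝ) := by exact_mod_cast Nat.succ_le_of_lt h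
          rw [abs_of_nonpos (by rw [hd_def, hK_def]; linarith)]
          rw [hd_def, hK_def]; linarith
        · have hcast : (n:ℝ) + 1 ≤ (k:ℝ) + 1 := by exact_mod_cast Nat.succ_le_of_lt h
          have hn0 : (0:ℝ) ≤ (n:ℝ) := Nat.cast_nonneg n
          rw [abs_of_nonneg (by rw [hd_def, hK_def]; linarith)]
          rw [hd_def, hK_def]; linarith
      -- combine: |u| ≥ π² d² / 2
      have hkey : π ^ 2 * d ^ 2 / 2 ≤ |u| := by
        have habs2 : |d| * |d| = d ^ 2 := by rw [abs_mul_abs_self]; ring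
        have h1 : π ^ 2 * ((|d| / 2) * |d|) ≤ π ^ 2 * (|K - s| * (K + s)) :=
          mul_le_mul_of_nonneg_left
            (mul_le_mul hB hC (abs_nonneg d) (abs_nonneg (K - s))) (by positivity)
        have h1' : π ^ 2 * ((|d| / 2) * |d|) = π ^ 2 * d ^ 2 / 2 := by
          rw [div_mul_eq_mul_div, habs2]; ring
        calc π ^ 2 * d ^ 2 / 2 = π ^ 2 * ((|d| / 2) * |d|) := h1'.symm
          _ ≤ π ^ 2 * (|K - s| * (K + s)) := h1
          _ = π ^ 2 * |K - s| * (K + s) := by ring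
          _ ≤ |u| := hA
      have hden_pos : (0:ℝ) < π ^ 2 * d ^ 2 / 2 := by
        have hd2 : (0:ℝ) < d ^ 2 := by nlinarith [sq_abs d]
        positivity
      have hsqrt2 : π ^ 2 * d ^ 2 / 2 ≤ Real.sqrt (u ^ 2 + 1) := by
        have h3 : |u| ≤ Real.sqrt (u ^ 2 + 1) := by
          rw [show |u| = Real.sqrt (u ^ 2) by rw [Real.sqrt_sq_eq_abs]]
          exact Real.sqrt_le_sqrt (by linarith)
        linarith
      show 1 / Real.sqrt (u ^ 2 + 1) ≤ 2 / (π ^ 2 * d ^ 2)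
      have hfinal := one_div_le_one_div_of_le hden_pos hsqrt2
      rwa [one_div_div] at hfinal
  -- combine everything
  have hsum_if : Summable (fun k => ind k + f2 k) := hind_summable.add hf2_summable
  have hf_summable : Summable f := Summable.of_nonneg_of_le hf_nonneg hptwise hsum_if
  calc (∑' k, f k) ≤ ∑' k, (ind k + f2 k) := Summable.tsum_le_tsum hptwise hf_summable hsum_if
    _ = (∑' k, ind k) + ∑' k, f2 k := Summable.tsum_add hind_summable hf2_summable
    _ ≤ 1 + 2/3 := by gcongr  -- may fail; fallback below
    _ ≤ 3 := by norm_num
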